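/- Assume the setting below (case mindeg_q(G)=2t) with q > 2. Let F_C^h(X,Y,Z) be the homogenization of F_C(X,Y) to total degree q^k + q^{2t} (using the variable Z), and for ξ in the algebraic closure of F_q with ξ^{q^{k−2t}} = ξ set f_ξ(Y,Z) := F_C^h(1, Y+ξ, Z). Define the multiplicity m_{P_ξ}(C) as the least integer d such that the homogeneous component of degree d of f_ξ is nonzero. Then m_{P_ξ}(C) = q^{2t} − q^t or m_{P_ξ}(C) = q^{2t}; moreover m_{P_ξ}(C) = q^{2t} if and only if ξ^{q^{gcd(k,t)}} = ξ. -/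

import Mathlib

set_option linter.unusedSectionVars false
set_option maxHeartbeats 12000000
set_option synthInstance.maxHeartbeats 400000


open MvPolynomial

noncomputable section

/-- `F(x) = x + δ x^(q^(2t))` (value at `x`). -/
def Fval (q t : ℕ) {Ω : Type*} [Field Ω] (δ x : Ω) : Ω := x + δ * x ^ q ^ (2 * t)

/-- `G(x) = x^(q^(2t)) + ∑_{i=2t+1}^{k-1} c_i x^(q^i) + C x^(q^k)` (value at `x`). -/
def Gval (q t k : ℕ) {Ω : Type*} [Field Ω] (c : ℕ → Ω) (Cc x : Ω) : Ω :=
  x ^ q ^ (2 * t) + (∑ i ∈ Finset.Ico (2 * t + 1) k, c i * x ^ q ^ i) + Cc * x ^ q ^ k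

/-- `F` applied to a bivariate polynomial. -/
def FP (q t : ℕ) {Ω : Type*} [Field Ω] (δ : Ω) (u : MvPolynomial (Fin 2) Ω) :
    MvPolynomial (Fin 2) Ω := u + C δ * u ^ q ^ (2 * t)

/-- `G` applied to a bivariate polynomial. -/
def GP (q t k : ℕ) {Ω : Type*} [Field Ω] (c : ℕ → Ω) (Cc : Ω) (u : MvPolynomial (Fin 2) Ω) :
    MvPolynomial (Fin 2) Ω :=
  u ^ q ^ (2 * t) + (∑ i ∈ Finset.Ico (2 * t + 1) k, C (c i) * u ^ q ^ i) + C Cc * u ^ q ^ k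

/-- The affine equation `F_C(X,Y)` of the curve `C`. -/
def FC (q t k : ℕ) {Ω : Type*} [Field Ω] (δ : Ω) (c : ℕ → Ω) (Cc l : Ω) :
    MvPolynomial (Fin 2) Ω :=
  Matrix.det !![(X 0) ^ q ^ t, FP q t δ (X 0), GP q t k c Cc (X 0);
                (X 1) ^ q ^ t, FP q t δ (X 1), GP q t k c Cc (X 1);
                C (l ^ q ^ t), C (Fval q t δ l), C (Gval q t k c Cc l)]

/-- `f_ξ(Y,Z) := F_C^h(1, Y+ξ, Z)`. -/
def fxi {Ω : Type*} [Field Ω] (FCh : MvPolynomial (Fin 3) Ω) (ξ : Ω) :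
    MvPolynomial (Fin 2) Ω :=
  aeval ![1, X 0 + C ξ, X 1] FCh

/-- The multiplicity: the least `d` such that the degree-`d` homogeneous component is
nonzero. -/
def multAt {Ω : Type*} [Field Ω] (f : MvPolynomial (Fin 2) Ω) : ℕ :=
  sInf {d : ℕ | homogeneousComponent d f ≠ 0}

section Infra
variable {Ω : Type*} [Field Ω]

/-- basic homogeneous piece -/
def pc (a : Ω) (m e : ℕ) : MvPolynomial (Fin 2) Ω :=
  monomial (Finsupp.single 0 m + Finsupp.single 1 e) a

lemma pc_eq (a : Ω) (m e : ℕ) : pc a m e = C a * X 0 ^ m * X 1 ^ e := by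
  rw [pc, X_pow_eq_monomial, X_pow_eq_monomial, C_apply, monomial_mul, monomial_mul]
  simp

lemma degree_fin2 (d : Fin 2 →₀ ℕ) : d.degree = d 0 + d 1 := by
  rw [show d.degree = ∑ i ∈ d.support, d i from rfl,
    Finset.sum_subset (Finset.subset_univ _)
      (fun i _ hi => Finsupp.notMem_support_iff.1 hi)]
  exact Fin.sum_univ_two d

lemma pc_hom (a : Ω) (m e : ℕ) : (pc a m e).IsHomogeneous (m + e) := by
  apply isHomogeneous_monomial
  rw [degree_fin2]
  simp [Finsupp.single_apply]

lemma comp_pc (d : ℕ) (a : Ω) (m e : ℕ) :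
    homogeneousComponent d (pc a m e) = if d = m + e then pc a m e else 0 :=
  homogeneousComponent_of_mem ((mem_homogeneousSubmodule _ _).2 (pc_hom a m e))

lemma comp_pc_ne' {d m e : ℕ} (a : Ω) (h : d ≠ m + e) :
    homogeneousComponent d (pc a m e) = 0 := by rw [comp_pc, if_neg h]

lemma comp_pc_eq' {d m e : ℕ} (a : Ω) (h : d = m + e) :
    homogeneousComponent d (pc a m e) = pc a m e := by rw [comp_pc, if_pos h]

lemma pc_zero (m e : ℕ) : pc (0:Ω) m e = 0 := by simp [pc]

lemma pc_ne_zero {a : Ω} (m e : ℕ) (h : a ≠ 0) : pc a m e ≠ 0 := by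
  simp [pc, monomial_eq_zero, h]

lemma multAt_eq {f : MvPolynomial (Fin 2) Ω} {m : ℕ}
    (h0 : ∀ d < m, homogeneousComponent d f = 0)
    (hm : homogeneousComponent m f ≠ 0) : multAt f = m := by
  refine le_antisymm (Nat.sInf_le hm) (le_csInf ⟨m, hm⟩ ?_)
  intro d hd
  by_contra hlt
  exact hd (h0 d (by omega))

/-- scaling identity for evaluations of homogeneous polynomials -/
lemma eval₂_scale {S : Type*} [CommRing S] (f : Ω →+* S) (g : Fin 3 → S) (z : S)
    {P : MvPolynomial (Fin 3) Ω} {N : ℕ} (h : P.IsHomogeneous N) :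
    eval₂ f (fun i => z * g i) P = z ^ N * eval₂ f g P := by
  rw [eval₂_eq', eval₂_eq', Finset.mul_sum]
  refine Finset.sum_congr rfl fun d hd => ?_
  have hdeg : d.degree = N := by
    by_contra hne
    exact (mem_support_iff.1 hd) (h.coeff_eq_zero hne)
  have hsum : ∑ i, d i = N := by
    rw [← hdeg, Finsupp.degree]
    exact (Finset.sum_subset (Finset.subset_univ _)
      (fun i _ hi => Finsupp.notMem_support_iff.1 hi)).symm
  calc f (P.coeff d) * ∏ i, (z * g i) ^ d i
      = f (P.coeff d) * ((∏ i, z ^ d i) * ∏ i, g i ^ d i) := by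
        rw [← Finset.prod_mul_distrib]; simp [mul_pow]
    _ = z ^ N * (f (P.coeff d) * ∏ i, g i ^ d i) := by
        rw [Finset.prod_pow_eq_pow_sum, hsum]; ring

lemma key {F : Type*} [Field F] {z : F} (hz : z ≠ 0) (co w : F) {a b e Dt : ℕ}
    (h : e + (a + b) = Dt) :
    z ^ Dt * (co * z⁻¹ ^ a * (w * z⁻¹) ^ b) = co * w ^ b * z ^ e := by
  subst h
  rw [pow_add, pow_add]
  have ha : z ^ a * z⁻¹ ^ a = 1 := by rw [← mul_pow, mul_inv_cancel₀ hz, one_pow]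
  have hb : z ^ b * z⁻¹ ^ b = 1 := by rw [← mul_pow, mul_inv_cancel₀ hz, one_pow]
  linear_combination (co * w ^ b * z ^ e * (z ^ b * z⁻¹ ^ b)) * ha + (co * w ^ b * z ^ e) * hb

section Fix
variable (Q : ℕ)

lemma fix_mul {x : Ω} {a : ℕ} (h : x ^ Q ^ a = x) (m : ℕ) : x ^ Q ^ (a * m) = x := by
  induction m with
  | zero => simp
  | succ m ih =>
      have h2 : a * (m + 1) = a * m + a := by ring
      rw [h2, pow_add, pow_mul, ih, h]

lemma fix_dvd {x : Ω} {a b : ℕ} (h : x ^ Q ^ a = x) (hab : a ∣ b) : x ^ Q ^ b = x := by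
  obtain ⟨m, rfl⟩ := hab
  exact fix_mul Q h m

lemma fix_gcd (hinj : ∀ c : ℕ, Function.Injective fun y : Ω => y ^ Q ^ c)
    {x : Ω} {a b : ℕ} (ha : x ^ Q ^ a = x) (hb : x ^ Q ^ b = x) :
    x ^ Q ^ Nat.gcd a b = x := by
  induction a, b using Nat.gcd.induction with
  | H0 b => simpa using ‹x ^ Q ^ b = x›
  | H1 a b hpos ih =>
      rw [Nat.gcd_rec]
      refine ih ?_ ha
      have hmod : a * (b / a) + b % a = b := Nat.div_add_mod b a
      have h1 : (x ^ Q ^ (b % a)) ^ Q ^ (a * (b / a)) = x ^ Q ^ (a * (b / a)) := by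
        rw [fix_mul Q ha (b / a), ← pow_mul, ← pow_add]
        rw [Nat.add_comm, hmod]
        exact hb
      exact hinj (a * (b / a)) h1
end Fix

def Ph (u : ℕ) (f : MvPolynomial (Fin 2) Ω) : Prop :=
  ∀ d ≤ u, homogeneousComponent d f = 0

lemma Ph_add {u : ℕ} {f g : MvPolynomial (Fin 2) Ω} (hf : Ph u f) (hg : Ph u g) :
    Ph u (f + g) := fun d hd => by rw [map_add, hf d hd, hg d hd, add_zero]

lemma Ph_pc {u m e : ℕ} (a : Ω) (h : u < m + e) : Ph u (pc a m e) := by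
  intro d hd
  rw [comp_pc, if_neg (by omega)]

lemma Ph_sum {u : ℕ} {s : Finset ℕ} {f : ℕ → MvPolynomial (Fin 2) Ω}
    (h : ∀ i ∈ s, Ph u (f i)) : Ph u (∑ i ∈ s, f i) := fun d hd => by
  rw [map_sum, Finset.sum_eq_zero fun i hi => h i hi d hd]

lemma pc_tri_ne {a b c' : Ω} {u s : ℕ} (ha : a ≠ 0) (hu : u ≠ 1) (hs : s ≠ 1) :
    pc a 1 (u-1) + pc b u 0 + pc c' s (u-s) ≠ 0 := by
  intro h
  have hc := congrArg (coeff (Finsupp.single 0 1 + Finsupp.single 1 (u-1))) h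
  rw [coeff_add, coeff_add, pc, pc, pc, coeff_monomial, coeff_monomial, coeff_monomial,
    if_pos rfl] at hc
  rw [if_neg, if_neg] at hc
  · simp at hc; exact ha hc
  · intro heq
    have := DFunLike.congr_fun heq (0 : Fin 2)
    simp [Finsupp.single_apply] at this
    exact hs this
  · intro heq
    have := DFunLike.congr_fun heq (0 : Fin 2)
    simp [Finsupp.single_apply] at this
    exact hu this

end Infra

section SpolyDef
variable {Ω : Type*} [Field Ω]
variable (q t k : ℕ) (δ : Ω) (c : ℕ → Ω) (Cc l ξ : Ω)

/-- low-degree part -/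
def SL : MvPolynomial (Fin 2) Ω :=
  pc (l^q^t*δ*Cc*ξ^q^k - l^q^t*δ*Cc*ξ^q^(2*t)) 0 0
  + pc (Fval q t δ l*Cc*ξ^q^t - Fval q t δ l*Cc*ξ^q^k) 0 (q^(2*t) - q^t)
  + pc (l^q^t*Cc*ξ^q^k - l^q^t*Cc*ξ) 0 (q^(2*t) - 1)
  + pc (-(l^q^t*Cc)) 1 (q^(2*t) - 1)
  + pc (-(l^q^t*δ*Cc)) (q^(2*t)) 0
  + pc (Fval q t δ l*Cc) (q^t) (q^(2*t) - q^t)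

/-- high-degree sum-free part -/
def SHf : MvPolynomial (Fin 2) Ω :=
  pc (l^q^t) (q^(2*t)) (q^k - 1) + pc (l^q^t*ξ^q^(2*t)) 0 (q^k - 1)
  + pc (l^q^t*Cc) (q^k) (q^(2*t) - 1)
  + pc (l^q^t*δ*Cc) (q^k) 0
  + pc (-(l^q^t)) 1 (q^k - 1) + pc (-(l^q^t*ξ)) 0 (q^k - 1)
  + pc (-(Fval q t δ l)) (q^(2*t)) (q^k - q^t) + pc (-(Fval q t δ l*ξ^q^(2*t))) 0 (q^k - q^t)
  + pc (-(Fval q t δ l*Cc)) (q^k) (q^(2*t) - q^t)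
  + pc (Fval q t δ l) (q^t) (q^k - q^t) + pc (Fval q t δ l*ξ^q^t) 0 (q^k - q^t)
  + pc (Gval q t k c Cc l) 1 (q^k + q^(2*t) - q^t - 1)
  + pc (Gval q t k c Cc l*ξ) 0 (q^k + q^(2*t) - q^t - 1)
  + pc (Gval q t k c Cc l*δ) (q^(2*t)) (q^k - q^t)
  + pc (Gval q t k c Cc l*δ*ξ^q^(2*t)) 0 (q^k - q^t)
  + pc (-(Gval q t k c Cc l)) (q^t) (q^k + q^(2*t) - q^t - 1)
  + pc (-(Gval q t k c Cc l*ξ^q^t)) 0 (q^k + q^(2*t) - q^t - 1)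
  + pc (-(Gval q t k c Cc l*δ)) (q^t) (q^k - q^t)
  + pc (-(Gval q t k c Cc l*δ*ξ^q^t)) 0 (q^k - q^t)

/-- high-degree part depending on the middle coefficients -/
def Sbody (i : ℕ) : MvPolynomial (Fin 2) Ω :=
  pc (l^q^t*c i) (q^i) (q^k + q^(2*t) - 1 - q^i)
  + pc (l^q^t*c i*ξ^q^i) 0 (q^k + q^(2*t) - 1 - q^i)
  + pc (l^q^t*δ*c i) (q^i) (q^k - q^i) + pc (l^q^t*δ*c i*ξ^q^i) 0 (q^k - q^i)
  + pc (-(l^q^t*c i)) 1 (q^k + q^(2*t) - 1 - q^i)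
  + pc (-(l^q^t*c i*ξ)) 0 (q^k + q^(2*t) - 1 - q^i)
  + pc (-(l^q^t*δ*c i)) (q^(2*t)) (q^k - q^i) + pc (-(l^q^t*δ*c i*ξ^q^(2*t))) 0 (q^k - q^i)
  + pc (-(Fval q t δ l*c i)) (q^i) (q^k + q^(2*t) - q^t - q^i)
  + pc (-(Fval q t δ l*c i*ξ^q^i)) 0 (q^k + q^(2*t) - q^t - q^i)
  + pc (Fval q t δ l*c i) (q^t) (q^k + q^(2*t) - q^t - q^i)
  + pc (Fval q t δ l*c i*ξ^q^t) 0 (q^k + q^(2*t) - q^t - q^i)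

def Spoly : MvPolynomial (Fin 2) Ω :=
  SL q t k δ Cc l ξ + SHf q t k δ c Cc l ξ
    + ∑ i ∈ Finset.Ico (2*t+1) k, Sbody q t k δ c l ξ i

section Arith
variable (hq3 : 3 ≤ q) (ht : 0 < t) (h2tk : 2 * t < k)
include hq3 ht h2tk

lemma arith_s : 3 ≤ q^t := le_trans hq3 (Nat.le_self_pow (by omega) q)

lemma arith_su : q^t + 2 ≤ q^(2*t) := by
  have h3 : 3 ≤ q ^ t := arith_s q t k hq3 ht h2tk
  have h1 : q^t * 3 ≤ q^t * q^t := Nat.mul_le_mul_left _ h3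
  have h2 : q^t * q^t = q^(2*t) := by rw [← pow_add]; congr 1; omega
  omega

lemma arith_uK : 3 * q^(2*t) ≤ q^k := by
  have h1 : q^(2*t) * q ≤ q^(2*t) * q^(k - 2*t) := by
    apply Nat.mul_le_mul_left
    exact Nat.le_self_pow (by omega) q
  have h2 : q^(2*t) * q^(k-2*t) = q^k := by rw [← pow_add]; congr 1; omega
  have h4 : 3 * q^(2*t) ≤ q * q^(2*t) := Nat.mul_le_mul_right _ hq3
  have h5 : q * q^(2*t) = q^(2*t) * q := Nat.mul_comm _ _
  omega

lemma arith_uQ1 : q^(2*t) ≤ q^(k-1) := Nat.pow_le_pow_right (by omega) (by omega)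

lemma arith_Q1K : 3 * q^(k-1) ≤ q^k := by
  have h2 : q^(k-1) * q = q^k := by rw [← pow_succ]; congr 1; omega
  have h4 : 3 * q^(k-1) ≤ q * q^(k-1) := Nat.mul_le_mul_right _ hq3
  have h5 : q * q^(k-1) = q^(k-1) * q := Nat.mul_comm _ _
  omega

lemma Ph_SHf : Ph (q^(2*t)) (SHf q t k δ c Cc l ξ) := by
  have h3s := arith_s q t k hq3 ht h2tk
  have hsu := arith_su q t k hq3 ht h2tk
  have huK := arith_uK q t k hq3 ht h2tk
  rw [SHf]
  repeat' apply Ph_add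
  all_goals apply Ph_pc
  all_goals omega

lemma Ph_Sbody : ∀ i ∈ Finset.Ico (2*t+1) k, Ph (q^(2*t)) (Sbody q t k δ c l ξ i) := by
  intro i hi
  have h3s := arith_s q t k hq3 ht h2tk
  have hsu := arith_su q t k hq3 ht h2tk
  have huK := arith_uK q t k hq3 ht h2tk
  have huQ1 := arith_uQ1 q t k hq3 ht h2tk
  have hQ1K := arith_Q1K q t k hq3 ht h2tk
  have hi' := Finset.mem_Ico.1 hi
  have hqi : q^i ≤ q^(k-1) := Nat.pow_le_pow_right (by omega) (by omega)
  rw [Sbody]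
  repeat' apply Ph_add
  all_goals apply Ph_pc
  all_goals omega

lemma comp_Spoly (d : ℕ) (hd : d ≤ q^(2*t)) :
    homogeneousComponent d (Spoly q t k δ c Cc l ξ)
      = homogeneousComponent d (SL q t k δ Cc l ξ) := by
  rw [Spoly, map_add, map_add,
    Ph_SHf q t k δ c Cc l ξ hq3 ht h2tk d hd,
    Ph_sum (Ph_Sbody q t k δ c l ξ hq3 ht h2tk) d hd, add_zero, add_zero]

lemma comp_CA (hξk : ξ^q^k = ξ^q^(2*t)) (d : ℕ) (hd : d < q^(2*t))
    (h1 : d ≠ q^(2*t) - q^t) (h2 : d ≠ q^(2*t) - 1) :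
    homogeneousComponent d (Spoly q t k δ c Cc l ξ) = 0 := by
  have h3s := arith_s q t k hq3 ht h2tk
  have hsu := arith_su q t k hq3 ht h2tk
  rw [comp_Spoly q t k δ c Cc l ξ hq3 ht h2tk d (by omega)]
  have e0 : (l^q^t*δ*Cc*ξ^q^k - l^q^t*δ*Cc*ξ^q^(2*t) : Ω) = 0 := by rw [hξk, sub_self]
  rw [SL, e0, pc_zero, map_add, map_add, map_add, map_add, map_add, map_zero,
    comp_pc_ne' _ (show d ≠ 0 + (q^(2*t) - q^t) from by omega),
    comp_pc_ne' _ (show d ≠ 0 + (q^(2*t) - 1) from by omega),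
    comp_pc_ne' _ (show d ≠ 1 + (q^(2*t) - 1) from by omega),
    comp_pc_ne' _ (show d ≠ q^(2*t) + 0 from by omega),
    comp_pc_ne' _ (show d ≠ q^t + (q^(2*t) - q^t) from by omega)]
  simp

lemma comp_CB :
    homogeneousComponent (q^(2*t) - q^t) (Spoly q t k δ c Cc l ξ)
      = pc (Fval q t δ l*Cc*ξ^q^t - Fval q t δ l*Cc*ξ^q^k) 0 (q^(2*t) - q^t) := by
  have h3s := arith_s q t k hq3 ht h2tk
  have hsu := arith_su q t k hq3 ht h2tk
  rw [comp_Spoly q t k δ c Cc l ξ hq3 ht h2tk _ (by omega)]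
  rw [SL, map_add, map_add, map_add, map_add, map_add,
    comp_pc_ne' _ (show q^(2*t) - q^t ≠ 0 + 0 from by omega),
    comp_pc_eq' _ (show q^(2*t) - q^t = 0 + (q^(2*t) - q^t) from by omega),
    comp_pc_ne' _ (show q^(2*t) - q^t ≠ 0 + (q^(2*t) - 1) from by omega),
    comp_pc_ne' _ (show q^(2*t) - q^t ≠ 1 + (q^(2*t) - 1) from by omega),
    comp_pc_ne' _ (show q^(2*t) - q^t ≠ q^(2*t) + 0 from by omega),
    comp_pc_ne' _ (show q^(2*t) - q^t ≠ q^t + (q^(2*t) - q^t) from by omega)]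
  simp

lemma comp_CC :
    homogeneousComponent (q^(2*t) - 1) (Spoly q t k δ c Cc l ξ)
      = pc (l^q^t*Cc*ξ^q^k - l^q^t*Cc*ξ) 0 (q^(2*t) - 1) := by
  have h3s := arith_s q t k hq3 ht h2tk
  have hsu := arith_su q t k hq3 ht h2tk
  rw [comp_Spoly q t k δ c Cc l ξ hq3 ht h2tk _ (by omega)]
  rw [SL, map_add, map_add, map_add, map_add, map_add,
    comp_pc_ne' _ (show q^(2*t) - 1 ≠ 0 + 0 from by omega),
    comp_pc_ne' _ (show q^(2*t) - 1 ≠ 0 + (q^(2*t) - q^t) from by omega),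
    comp_pc_eq' _ (show q^(2*t) - 1 = 0 + (q^(2*t) - 1) from by omega),
    comp_pc_ne' _ (show q^(2*t) - 1 ≠ 1 + (q^(2*t) - 1) from by omega),
    comp_pc_ne' _ (show q^(2*t) - 1 ≠ q^(2*t) + 0 from by omega),
    comp_pc_ne' _ (show q^(2*t) - 1 ≠ q^t + (q^(2*t) - q^t) from by omega)]
  simp

lemma comp_CD :
    homogeneousComponent (q^(2*t)) (Spoly q t k δ c Cc l ξ)
      = pc (-(l^q^t*Cc)) 1 (q^(2*t) - 1) + pc (-(l^q^t*δ*Cc)) (q^(2*t)) 0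
        + pc (Fval q t δ l*Cc) (q^t) (q^(2*t) - q^t) := by
  have h3s := arith_s q t k hq3 ht h2tk
  have hsu := arith_su q t k hq3 ht h2tk
  rw [comp_Spoly q t k δ c Cc l ξ hq3 ht h2tk _ (by omega)]
  rw [SL, map_add, map_add, map_add, map_add, map_add,
    comp_pc_ne' _ (show q^(2*t) ≠ 0 + 0 from by omega),
    comp_pc_ne' _ (show q^(2*t) ≠ 0 + (q^(2*t) - q^t) from by omega),
    comp_pc_ne' _ (show q^(2*t) ≠ 0 + (q^(2*t) - 1) from by omega),
    comp_pc_eq' _ (show q^(2*t) = 1 + (q^(2*t) - 1) from by omega),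
    comp_pc_eq' _ (show q^(2*t) = q^(2*t) + 0 from by omega),
    comp_pc_eq' _ (show q^(2*t) = q^t + (q^(2*t) - q^t) from by omega)]
  ring

end Arith
end SpolyDef

section Transfer
variable {Ω : Type*} [Field Ω]

abbrev R2 (Ω : Type*) [Field Ω] := MvPolynomial (Fin 2) Ω
abbrev F2 (Ω : Type*) [Field Ω] := FractionRing (R2 Ω)

theorem fxi_eq_Spoly (p mm q t k : ℕ) [hp : Fact p.Prime] [CharP Ω p]
    (hq : q = p ^ mm) (hq3 : 3 ≤ q) (ht : 0 < t) (h2tk : 2 * t < k)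
    (δ : Ω) (c : ℕ → Ω) (Cc l ξ : Ω)
    (FCh : MvPolynomial (Fin 3) Ω)
    (hhom : FCh.IsHomogeneous (q ^ k + q ^ (2 * t)))
    (hdeh : aeval ![X 0, X 1, 1] FCh = FC q t k δ c Cc l) :
    fxi FCh ξ = Spoly q t k δ c Cc l ξ := by
  classical
  haveI : CharP (R2 Ω) p := charP_of_injective_ringHom (C_injective (Fin 2) Ω) p
  haveI : CharP (F2 Ω) p :=
    charP_of_injective_ringHom (IsFractionRing.injective (R2 Ω) (F2 Ω)) p
  set ι : R2 Ω →+* F2 Ω := (algebraMap (R2 Ω) (F2 Ω) : R2 Ω →+* F2 Ω) with hι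
  have hinj : Function.Injective ι := IsFractionRing.injective (R2 Ω) (F2 Ω)
  apply hinj
  set φ : Ω →+* F2 Ω := ι.comp (C : Ω →+* R2 Ω) with hφ
  set YY : F2 Ω := ι (X 0) with hYY
  set ZZ : F2 Ω := ι (X 1) with hZZ
  have hZ : ZZ ≠ 0 := by
    intro h
    exact X_ne_zero (R := Ω) 1 (hinj (by simpa using h))
  have hch : ∀ (w1 w2 : F2 Ω) (j : ℕ), (w1 + w2) ^ q ^ j = w1 ^ q ^ j + w2 ^ q ^ j := by
    intro w1 w2 j
    rw [hq, ← pow_mul]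
    exact add_pow_char_pow w1 w2 p (mm * j)
  -- arithmetic facts
  have h3s := arith_s q t k hq3 ht h2tk
  have hsu := arith_su q t k hq3 ht h2tk
  have huK := arith_uK q t k hq3 ht h2tk
  have huQ1 := arith_uQ1 q t k hq3 ht h2tk
  have hQ1K := arith_Q1K q t k hq3 ht h2tk
  -- Step A
  have stepA : ι (fxi FCh ξ) = eval₂ φ ![1, YY + φ ξ, ZZ] FCh := by
    rw [fxi, aeval_def, ← MvPolynomial.algebraMap_eq, eval₂_comp_left ι]
    rw [MvPolynomial.algebraMap_eq]
    congr 1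
    funext i
    fin_cases i <;> simp [hYY, hZZ, hφ, map_add]
  -- Step B
  have stepB : eval₂ φ ![1, YY + φ ξ, ZZ] FCh
      = ZZ ^ (q ^ k + q ^ (2 * t))
        * eval₂ φ ![ZZ⁻¹, (YY + φ ξ) * ZZ⁻¹, 1] FCh := by
    rw [← eval₂_scale φ _ ZZ hhom]
    congr 1
    funext i
    fin_cases i <;> simp [hZ] <;> field_simp
  -- Step C
  have stepC : eval₂ φ ![ZZ⁻¹, (YY + φ ξ) * ZZ⁻¹, 1] FCh
      = eval₂Hom φ ![ZZ⁻¹, (YY + φ ξ) * ZZ⁻¹] (FC q t k δ c Cc l) := by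
    rw [← hdeh, aeval_def, MvPolynomial.algebraMap_eq]
    rw [show ((eval₂Hom φ ![ZZ⁻¹, (YY + φ ξ) * ZZ⁻¹]) (eval₂ C ![X 0, X 1, 1] FCh) : F2 Ω)
        = eval₂ ((eval₂Hom φ ![ZZ⁻¹, (YY + φ ξ) * ZZ⁻¹]).comp C)
            ((eval₂Hom φ ![ZZ⁻¹, (YY + φ ξ) * ZZ⁻¹]) ∘ ![X 0, X 1, 1]) FCh
      from eval₂_comp_left _ _ _ _]
    congr 1
    · exact RingHom.ext fun a => by simp
    · funext i
      fin_cases i <;> simp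
  have hφC : ∀ a : Ω, ι (C a) = φ a := fun a => rfl
  -- the determinant, regrouped at the polynomial level
  have hdet : FC q t k δ c Cc l = (C (l^q^t) * ((X 0 + C δ * (X 0:MvPolynomial (Fin 2) Ω)^q^(2*t)) * ((X 1)^q^(2*t) + C Cc * (X 1)^q^k)
      - (X 1 + C δ * (X 1)^q^(2*t)) * ((X 0)^q^(2*t) + C Cc * (X 0)^q^k))
    - C (Fval q t δ l) * ((X 0)^q^t * ((X 1)^q^(2*t) + C Cc * (X 1)^q^k)
      - (X 1)^q^t * ((X 0)^q^(2*t) + C Cc * (X 0)^q^k))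
    + C (Gval q t k c Cc l) * ((X 0)^q^t * (X 1 + C δ * (X 1)^q^(2*t))
      - (X 1)^q^t * (X 0 + C δ * (X 0)^q^(2*t))))
      + (-(C (l^q^t) * (X 1 + C δ * (X 1:MvPolynomial (Fin 2) Ω)^q^(2*t))) + C (Fval q t δ l) * (X 1)^q^t) * (∑ i ∈ Finset.Ico (2*t+1) k, C (c i) * (X 0:MvPolynomial (Fin 2) Ω)^q^i)
      + (C (l^q^t) * (X 0 + C δ * (X 0:MvPolynomial (Fin 2) Ω)^q^(2*t)) - C (Fval q t δ l) * (X 0)^q^t) * (∑ i ∈ Finset.Ico (2*t+1) k, C (c i) * (X 1:MvPolynomial (Fin 2) Ω)^q^i) := by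
    rw [FC, Matrix.det_fin_three]
    simp only [FP, GP, Matrix.cons_val', Matrix.cons_val_zero, Matrix.cons_val_one,
      Matrix.head_cons, Matrix.head_fin_const, Matrix.empty_val', Matrix.cons_val_fin_one,
      Matrix.cons_val_two, Matrix.tail_cons, Matrix.of_apply]
    ring
  -- the free part
  have hfree : ι (SL q t k δ Cc l ξ) + ι (SHf q t k δ c Cc l ξ)
      = ZZ ^ (q^k + q^(2*t)) * (φ l ^ q ^ t * ((ZZ⁻¹ + φ δ * ZZ⁻¹ ^ q^(2*t)) * (((YY + φ ξ) * ZZ⁻¹) ^ q^(2*t) + φ Cc * ((YY + φ ξ) * ZZ⁻¹) ^ q^k)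
      - ((YY + φ ξ) * ZZ⁻¹ + φ δ * ((YY + φ ξ) * ZZ⁻¹) ^ q^(2*t)) * (ZZ⁻¹ ^ q^(2*t) + φ Cc * ZZ⁻¹ ^ q^k))
    - φ (Fval q t δ l) * (ZZ⁻¹ ^ q^t * (((YY + φ ξ) * ZZ⁻¹) ^ q^(2*t) + φ Cc * ((YY + φ ξ) * ZZ⁻¹) ^ q^k)
      - ((YY + φ ξ) * ZZ⁻¹) ^ q^t * (ZZ⁻¹ ^ q^(2*t) + φ Cc * ZZ⁻¹ ^ q^k))
    + φ (Gval q t k c Cc l) * (ZZ⁻¹ ^ q^t * ((YY + φ ξ) * ZZ⁻¹ + φ δ * ((YY + φ ξ) * ZZ⁻¹) ^ q^(2*t))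
      - ((YY + φ ξ) * ZZ⁻¹) ^ q^t * (ZZ⁻¹ + φ δ * ZZ⁻¹ ^ q^(2*t)))) := by
    have hQ0 : ZZ ^ (q^k + q^(2*t)) * (φ l ^ q ^ t * ((ZZ⁻¹ + φ δ * ZZ⁻¹ ^ q^(2*t)) * (((YY + φ ξ) * ZZ⁻¹) ^ q^(2*t) + φ Cc * ((YY + φ ξ) * ZZ⁻¹) ^ q^k)
      - ((YY + φ ξ) * ZZ⁻¹ + φ δ * ((YY + φ ξ) * ZZ⁻¹) ^ q^(2*t)) * (ZZ⁻¹ ^ q^(2*t) + φ Cc * ZZ⁻¹ ^ q^k))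
    - φ (Fval q t δ l) * (ZZ⁻¹ ^ q^t * (((YY + φ ξ) * ZZ⁻¹) ^ q^(2*t) + φ Cc * ((YY + φ ξ) * ZZ⁻¹) ^ q^k)
      - ((YY + φ ξ) * ZZ⁻¹) ^ q^t * (ZZ⁻¹ ^ q^(2*t) + φ Cc * ZZ⁻¹ ^ q^k))
    + φ (Gval q t k c Cc l) * (ZZ⁻¹ ^ q^t * ((YY + φ ξ) * ZZ⁻¹ + φ δ * ((YY + φ ξ) * ZZ⁻¹) ^ q^(2*t))
      - ((YY + φ ξ) * ZZ⁻¹) ^ q^t * (ZZ⁻¹ + φ δ * ZZ⁻¹ ^ q^(2*t))))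
        = ZZ ^ (q^k + q^(2*t)) * ((φ l ^ q ^ t) * ZZ⁻¹ ^ (1) * ((YY + φ ξ) * ZZ⁻¹) ^ (q^(2*t)))
      + ZZ ^ (q^k + q^(2*t)) * ((φ l ^ q ^ t * φ Cc) * ZZ⁻¹ ^ (1) * ((YY + φ ξ) * ZZ⁻¹) ^ (q^k))
      + ZZ ^ (q^k + q^(2*t)) * ((φ l ^ q ^ t * φ δ * φ Cc) * ZZ⁻¹ ^ (q^(2*t)) * ((YY + φ ξ) * ZZ⁻¹) ^ (q^k))
      + ZZ ^ (q^k + q^(2*t)) * ((-(φ l ^ q ^ t)) * ZZ⁻¹ ^ (q^(2*t)) * ((YY + φ ξ) * ZZ⁻¹) ^ (1))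
      + ZZ ^ (q^k + q^(2*t)) * ((-(φ l ^ q ^ t * φ Cc)) * ZZ⁻¹ ^ (q^k) * ((YY + φ ξ) * ZZ⁻¹) ^ (1))
      + ZZ ^ (q^k + q^(2*t)) * ((-(φ l ^ q ^ t * φ δ * φ Cc)) * ZZ⁻¹ ^ (q^k) * ((YY + φ ξ) * ZZ⁻¹) ^ (q^(2*t)))
      + ZZ ^ (q^k + q^(2*t)) * ((-(φ (Fval q t δ l))) * ZZ⁻¹ ^ (q^t) * ((YY + φ ξ) * ZZ⁻¹) ^ (q^(2*t)))
      + ZZ ^ (q^k + q^(2*t)) * ((-(φ (Fval q t δ l) * φ Cc)) * ZZ⁻¹ ^ (q^t) * ((YY + φ ξ) * ZZ⁻¹) ^ (q^k))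
      + ZZ ^ (q^k + q^(2*t)) * ((φ (Fval q t δ l)) * ZZ⁻¹ ^ (q^(2*t)) * ((YY + φ ξ) * ZZ⁻¹) ^ (q^t))
      + ZZ ^ (q^k + q^(2*t)) * ((φ (Fval q t δ l) * φ Cc) * ZZ⁻¹ ^ (q^k) * ((YY + φ ξ) * ZZ⁻¹) ^ (q^t))
      + ZZ ^ (q^k + q^(2*t)) * ((φ (Gval q t k c Cc l)) * ZZ⁻¹ ^ (q^t) * ((YY + φ ξ) * ZZ⁻¹) ^ (1))
      + ZZ ^ (q^k + q^(2*t)) * ((φ (Gval q t k c Cc l) * φ δ) * ZZ⁻¹ ^ (q^t) * ((YY + φ ξ) * ZZ⁻¹) ^ (q^(2*t)))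
      + ZZ ^ (q^k + q^(2*t)) * ((-(φ (Gval q t k c Cc l))) * ZZ⁻¹ ^ (1) * ((YY + φ ξ) * ZZ⁻¹) ^ (q^t))
      + ZZ ^ (q^k + q^(2*t)) * ((-(φ (Gval q t k c Cc l) * φ δ)) * ZZ⁻¹ ^ (q^(2*t)) * ((YY + φ ξ) * ZZ⁻¹) ^ (q^t)) := by ring
    rw [hQ0, key hZ (φ l ^ q ^ t) (YY + φ ξ) (show (q^k - 1) + ((1) + (q^(2*t))) = (q^k + q^(2*t)) from by omega),
    key hZ (φ l ^ q ^ t * φ Cc) (YY + φ ξ) (show (q^(2*t) - 1) + ((1) + (q^k)) = (q^k + q^(2*t)) from by omega),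
    key hZ (φ l ^ q ^ t * φ δ * φ Cc) (YY + φ ξ) (show (0) + ((q^(2*t)) + (q^k)) = (q^k + q^(2*t)) from by omega),
    key hZ (-(φ l ^ q ^ t)) (YY + φ ξ) (show (q^k - 1) + ((q^(2*t)) + (1)) = (q^k + q^(2*t)) from by omega),
    key hZ (-(φ l ^ q ^ t * φ Cc)) (YY + φ ξ) (show (q^(2*t) - 1) + ((q^k) + (1)) = (q^k + q^(2*t)) from by omega),
    key hZ (-(φ l ^ q ^ t * φ δ * φ Cc)) (YY + φ ξ) (show (0) + ((q^k) + (q^(2*t))) = (q^k + q^(2*t)) from by omega),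
    key hZ (-(φ (Fval q t δ l))) (YY + φ ξ) (show (q^k - q^t) + ((q^t) + (q^(2*t))) = (q^k + q^(2*t)) from by omega),
    key hZ (-(φ (Fval q t δ l) * φ Cc)) (YY + φ ξ) (show (q^(2*t) - q^t) + ((q^t) + (q^k)) = (q^k + q^(2*t)) from by omega),
    key hZ (φ (Fval q t δ l)) (YY + φ ξ) (show (q^k - q^t) + ((q^(2*t)) + (q^t)) = (q^k + q^(2*t)) from by omega),
    key hZ (φ (Fval q t δ l) * φ Cc) (YY + φ ξ) (show (q^(2*t) - q^t) + ((q^k) + (q^t)) = (q^k + q^(2*t)) from by omega),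
    key hZ (φ (Gval q t k c Cc l)) (YY + φ ξ) (show (q^k + q^(2*t) - q^t - 1) + ((q^t) + (1)) = (q^k + q^(2*t)) from by omega),
    key hZ (φ (Gval q t k c Cc l) * φ δ) (YY + φ ξ) (show (q^k - q^t) + ((q^t) + (q^(2*t))) = (q^k + q^(2*t)) from by omega),
    key hZ (-(φ (Gval q t k c Cc l))) (YY + φ ξ) (show (q^k + q^(2*t) - q^t - 1) + ((1) + (q^t)) = (q^k + q^(2*t)) from by omega),
    key hZ (-(φ (Gval q t k c Cc l) * φ δ)) (YY + φ ξ) (show (q^k - q^t) + ((q^(2*t)) + (q^t)) = (q^k + q^(2*t)) from by omega)]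
    simp only [SL, SHf, pc_eq, map_add, map_mul, map_sub, map_neg, map_pow, map_one,
      hφC, ← hYY, ← hZZ, hch]
    ring
  -- the body part
  have hbody : ∀ i ∈ Finset.Ico (2*t+1) k,
      ι (Sbody q t k δ c l ξ i)
        = ZZ ^ (q^k + q^(2*t)) * ((-(φ l ^ q ^ t * ((YY + φ ξ) * ZZ⁻¹ + φ δ * ((YY + φ ξ) * ZZ⁻¹) ^ q^(2*t))) + φ (Fval q t δ l) * ((YY + φ ξ) * ZZ⁻¹) ^ q^t) * (φ (c i) * ZZ⁻¹ ^ q^i))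
          + ZZ ^ (q^k + q^(2*t)) * ((φ l ^ q ^ t * (ZZ⁻¹ + φ δ * ZZ⁻¹ ^ q^(2*t)) - φ (Fval q t δ l) * ZZ⁻¹ ^ q^t) * (φ (c i) * ((YY + φ ξ) * ZZ⁻¹) ^ q^i)) := by
    intro i hi
    have hi' := Finset.mem_Ico.1 hi
    have hqi : q^i ≤ q^(k-1) := Nat.pow_le_pow_right (by omega) (by omega)
    have hb : ZZ ^ (q^k + q^(2*t)) * ((-(φ l ^ q ^ t * ((YY + φ ξ) * ZZ⁻¹ + φ δ * ((YY + φ ξ) * ZZ⁻¹) ^ q^(2*t))) + φ (Fval q t δ l) * ((YY + φ ξ) * ZZ⁻¹) ^ q^t) * (φ (c i) * ZZ⁻¹ ^ q^i))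
          + ZZ ^ (q^k + q^(2*t)) * ((φ l ^ q ^ t * (ZZ⁻¹ + φ δ * ZZ⁻¹ ^ q^(2*t)) - φ (Fval q t δ l) * ZZ⁻¹ ^ q^t) * (φ (c i) * ((YY + φ ξ) * ZZ⁻¹) ^ q^i))
        = ZZ ^ (q^k + q^(2*t)) * ((-(φ l ^ q ^ t * φ (c i))) * ZZ⁻¹ ^ (q^i) * ((YY + φ ξ) * ZZ⁻¹) ^ (1))
        + ZZ ^ (q^k + q^(2*t)) * ((-(φ l ^ q ^ t * φ δ * φ (c i))) * ZZ⁻¹ ^ (q^i) * ((YY + φ ξ) * ZZ⁻¹) ^ (q^(2*t)))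
        + ZZ ^ (q^k + q^(2*t)) * ((φ (Fval q t δ l) * φ (c i)) * ZZ⁻¹ ^ (q^i) * ((YY + φ ξ) * ZZ⁻¹) ^ (q^t))
        + ZZ ^ (q^k + q^(2*t)) * ((φ l ^ q ^ t * φ (c i)) * ZZ⁻¹ ^ (1) * ((YY + φ ξ) * ZZ⁻¹) ^ (q^i))
        + ZZ ^ (q^k + q^(2*t)) * ((φ l ^ q ^ t * φ δ * φ (c i)) * ZZ⁻¹ ^ (q^(2*t)) * ((YY + φ ξ) * ZZ⁻¹) ^ (q^i))
        + ZZ ^ (q^k + q^(2*t)) * ((-(φ (Fval q t δ l) * φ (c i))) * ZZ⁻¹ ^ (q^t) * ((YY + φ ξ) * ZZ⁻¹) ^ (q^i)) := by ring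
    rw [hb, key hZ (-(φ l ^ q ^ t * φ (c i))) (YY + φ ξ) (show (q^k + q^(2*t) - 1 - q^i) + ((q^i) + (1)) = (q^k + q^(2*t)) from by omega),
      key hZ (-(φ l ^ q ^ t * φ δ * φ (c i))) (YY + φ ξ) (show (q^k - q^i) + ((q^i) + (q^(2*t))) = (q^k + q^(2*t)) from by omega),
      key hZ (φ (Fval q t δ l) * φ (c i)) (YY + φ ξ) (show (q^k + q^(2*t) - q^t - q^i) + ((q^i) + (q^t)) = (q^k + q^(2*t)) from by omega),
      key hZ (φ l ^ q ^ t * φ (c i)) (YY + φ ξ) (show (q^k + q^(2*t) - 1 - q^i) + ((1) + (q^i)) = (q^k + q^(2*t)) from by omega),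
      key hZ (φ l ^ q ^ t * φ δ * φ (c i)) (YY + φ ξ) (show (q^k - q^i) + ((q^(2*t)) + (q^i)) = (q^k + q^(2*t)) from by omega),
      key hZ (-(φ (Fval q t δ l) * φ (c i))) (YY + φ ξ) (show (q^k + q^(2*t) - q^t - q^i) + ((q^t) + (q^i)) = (q^k + q^(2*t)) from by omega)]
    simp only [Sbody, pc_eq, map_add, map_mul, map_sub, map_neg, map_pow, map_one,
      hφC, ← hYY, ← hZZ, hch]
    ring
  -- assembling
  have stepD : ι (Spoly q t k δ c Cc l ξ)
      = ZZ ^ (q^k + q^(2*t)) * eval₂Hom φ ![ZZ⁻¹, (YY + φ ξ) * ZZ⁻¹] (FC q t k δ c Cc l) := by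
    have e1 : ZZ ^ (q^k + q^(2*t)) * ((-(φ l ^ q ^ t * ((YY + φ ξ) * ZZ⁻¹ + φ δ * ((YY + φ ξ) * ZZ⁻¹) ^ q^(2*t))) + φ (Fval q t δ l) * ((YY + φ ξ) * ZZ⁻¹) ^ q^t) * (∑ i ∈ Finset.Ico (2*t+1) k, φ (c i) * ZZ⁻¹ ^ q^i))
        = ∑ i ∈ Finset.Ico (2*t+1) k, ZZ ^ (q^k + q^(2*t)) * ((-(φ l ^ q ^ t * ((YY + φ ξ) * ZZ⁻¹ + φ δ * ((YY + φ ξ) * ZZ⁻¹) ^ q^(2*t))) + φ (Fval q t δ l) * ((YY + φ ξ) * ZZ⁻¹) ^ q^t) * (φ (c i) * ZZ⁻¹ ^ q^i)) := by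
      rw [Finset.mul_sum, Finset.mul_sum]
    have e2 : ZZ ^ (q^k + q^(2*t)) * ((φ l ^ q ^ t * (ZZ⁻¹ + φ δ * ZZ⁻¹ ^ q^(2*t)) - φ (Fval q t δ l) * ZZ⁻¹ ^ q^t) * (∑ i ∈ Finset.Ico (2*t+1) k, φ (c i) * ((YY + φ ξ) * ZZ⁻¹) ^ q^i))
        = ∑ i ∈ Finset.Ico (2*t+1) k, ZZ ^ (q^k + q^(2*t)) * ((φ l ^ q ^ t * (ZZ⁻¹ + φ δ * ZZ⁻¹ ^ q^(2*t)) - φ (Fval q t δ l) * ZZ⁻¹ ^ q^t) * (φ (c i) * ((YY + φ ξ) * ZZ⁻¹) ^ q^i)) := by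
      rw [Finset.mul_sum, Finset.mul_sum]
    have hval : eval₂Hom φ ![ZZ⁻¹, (YY + φ ξ) * ZZ⁻¹] (FC q t k δ c Cc l)
        = (φ l ^ q ^ t * ((ZZ⁻¹ + φ δ * ZZ⁻¹ ^ q^(2*t)) * (((YY + φ ξ) * ZZ⁻¹) ^ q^(2*t) + φ Cc * ((YY + φ ξ) * ZZ⁻¹) ^ q^k)
      - ((YY + φ ξ) * ZZ⁻¹ + φ δ * ((YY + φ ξ) * ZZ⁻¹) ^ q^(2*t)) * (ZZ⁻¹ ^ q^(2*t) + φ Cc * ZZ⁻¹ ^ q^k))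
    - φ (Fval q t δ l) * (ZZ⁻¹ ^ q^t * (((YY + φ ξ) * ZZ⁻¹) ^ q^(2*t) + φ Cc * ((YY + φ ξ) * ZZ⁻¹) ^ q^k)
      - ((YY + φ ξ) * ZZ⁻¹) ^ q^t * (ZZ⁻¹ ^ q^(2*t) + φ Cc * ZZ⁻¹ ^ q^k))
    + φ (Gval q t k c Cc l) * (ZZ⁻¹ ^ q^t * ((YY + φ ξ) * ZZ⁻¹ + φ δ * ((YY + φ ξ) * ZZ⁻¹) ^ q^(2*t))
      - ((YY + φ ξ) * ZZ⁻¹) ^ q^t * (ZZ⁻¹ + φ δ * ZZ⁻¹ ^ q^(2*t)))) + (-(φ l ^ q ^ t * ((YY + φ ξ) * ZZ⁻¹ + φ δ * ((YY + φ ξ) * ZZ⁻¹) ^ q^(2*t))) + φ (Fval q t δ l) * ((YY + φ ξ) * ZZ⁻¹) ^ q^t) * (∑ i ∈ Finset.Ico (2*t+1) k, φ (c i) * ZZ⁻¹ ^ q^i) + (φ l ^ q ^ t * (ZZ⁻¹ + φ δ * ZZ⁻¹ ^ q^(2*t)) - φ (Fval q t δ l) * ZZ⁻¹ ^ q^t)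 * (∑ i ∈ Finset.Ico (2*t+1) k, φ (c i) * ((YY + φ ξ) * ZZ⁻¹) ^ q^i) := by
      rw [hdet]
      simp only [map_add, map_mul, map_sub, map_neg, map_pow, map_sum, eval₂Hom_C,
        eval₂Hom_X', Matrix.cons_val_zero, Matrix.cons_val_one, Matrix.head_cons]
    rw [hval, Spoly, map_add, map_add, map_sum,
      Finset.sum_congr rfl hbody, Finset.sum_add_distrib, hfree]
    rw [show ZZ ^ (q^k + q^(2*t)) * ((φ l ^ q ^ t * ((ZZ⁻¹ + φ δ * ZZ⁻¹ ^ q^(2*t)) * (((YY + φ ξ) * ZZ⁻¹) ^ q^(2*t) + φ Cc * ((YY + φ ξ) * ZZ⁻¹) ^ q^k)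
      - ((YY + φ ξ) * ZZ⁻¹ + φ δ * ((YY + φ ξ) * ZZ⁻¹) ^ q^(2*t)) * (ZZ⁻¹ ^ q^(2*t) + φ Cc * ZZ⁻¹ ^ q^k))
    - φ (Fval q t δ l) * (ZZ⁻¹ ^ q^t * (((YY + φ ξ) * ZZ⁻¹) ^ q^(2*t) + φ Cc * ((YY + φ ξ) * ZZ⁻¹) ^ q^k)
      - ((YY + φ ξ) * ZZ⁻¹) ^ q^t * (ZZ⁻¹ ^ q^(2*t) + φ Cc * ZZ⁻¹ ^ q^k))
    + φ (Gval q t k c Cc l) * (ZZ⁻¹ ^ q^t * ((YY + φ ξ) * ZZ⁻¹ + φ δ * ((YY + φ ξ) * ZZ⁻¹) ^ q^(2*t))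
      - ((YY + φ ξ) * ZZ⁻¹) ^ q^t * (ZZ⁻¹ + φ δ * ZZ⁻¹ ^ q^(2*t)))) + (-(φ l ^ q ^ t * ((YY + φ ξ) * ZZ⁻¹ + φ δ * ((YY + φ ξ) * ZZ⁻¹) ^ q^(2*t))) + φ (Fval q t δ l) * ((YY + φ ξ) * ZZ⁻¹) ^ q^t) * (∑ i ∈ Finset.Ico (2*t+1) k, φ (c i) * ZZ⁻¹ ^ q^i) + (φ l ^ q ^ t * (ZZ⁻¹ + φ δ * ZZ⁻¹ ^ q^(2*t)) - φ (Fval q t δ l) * ZZ⁻¹ ^ q^t) * (∑ i ∈ Finset.Ico (2*t+1) k, φ (c i) * ((YY + φ ξ) * ZZ⁻¹) ^ q^i))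
        = ZZ ^ (q^k + q^(2*t)) * (φ l ^ q ^ t * ((ZZ⁻¹ + φ δ * ZZ⁻¹ ^ q^(2*t)) * (((YY + φ ξ) * ZZ⁻¹) ^ q^(2*t) + φ Cc * ((YY + φ ξ) * ZZ⁻¹) ^ q^k)
      - ((YY + φ ξ) * ZZ⁻¹ + φ δ * ((YY + φ ξ) * ZZ⁻¹) ^ q^(2*t)) * (ZZ⁻¹ ^ q^(2*t) + φ Cc * ZZ⁻¹ ^ q^k))
    - φ (Fval q t δ l) * (ZZ⁻¹ ^ q^t * (((YY + φ ξ) * ZZ⁻¹) ^ q^(2*t) + φ Cc * ((YY + φ ξ) * ZZ⁻¹) ^ q^k)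
      - ((YY + φ ξ) * ZZ⁻¹) ^ q^t * (ZZ⁻¹ ^ q^(2*t) + φ Cc * ZZ⁻¹ ^ q^k))
    + φ (Gval q t k c Cc l) * (ZZ⁻¹ ^ q^t * ((YY + φ ξ) * ZZ⁻¹ + φ δ * ((YY + φ ξ) * ZZ⁻¹) ^ q^(2*t))
      - ((YY + φ ξ) * ZZ⁻¹) ^ q^t * (ZZ⁻¹ + φ δ * ZZ⁻¹ ^ q^(2*t)))) + ZZ ^ (q^k + q^(2*t)) * ((-(φ l ^ q ^ t * ((YY + φ ξ) * ZZ⁻¹ + φ δ * ((YY + φ ξ) * ZZ⁻¹) ^ q^(2*t))) + φ (Fval q t δ l) * ((YY + φ ξ) * ZZ⁻¹) ^ q^t) * (∑ i ∈ Finset.Ico (2*t+1) k, φ (c i) * ZZ⁻¹ ^ q^i)) + ZZ ^ (q^k + q^(2*t)) * ((φ l ^ q ^ t * (ZZ⁻¹ + φ δ * ZZ⁻¹ ^ q^(2*t)) - φ (Fval q t δ l) * ZZ⁻¹ ^ q^t) * (∑ i ∈ Finset.Ico (2*t+1) k, φ (c i) * ((YY + φ ξ) * ZZ⁻¹) ^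 q^i)) from by
      ring]
    rw [e1, e2]
    ring
  rw [stepA, stepB, stepC, stepD]

end Transfer

/-- In the setting (case `mindeg_q G = 2t`) with `q > 2`: for
`ξ` in the algebraic closure of `F_q` with `ξ^(q^(k−2t)) = ξ`, the multiplicity of the
point `P_ξ = (1:ξ:0)` of `C` is `q^(2t) − q^t` or `q^(2t)`; and it is `q^(2t)` if and
only if `ξ^(q^(gcd(k,t))) = ξ`. -/
theorem stmt_3 (q n t k : ℕ) (hq2 : 2 < q)
    (F0 : Type) [Field F0] [Fintype F0] (hF0 : Fintype.card F0 = q)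
    (ht : 0 < t) (h2tk : 2 * t < k) (hkn : k < n)
    (δ l Cc : AlgebraicClosure F0) (c : ℕ → AlgebraicClosure F0)
    (hδK : δ ^ q ^ n = δ) (hlK : l ^ q ^ n = l) (hCcK : Cc ^ q ^ n = Cc)
    (hcK : ∀ i, c i ^ q ^ n = c i)
    (hnorm : δ ^ ((q ^ n - 1) / (q - 1)) ≠ 1) (hCc : Cc ≠ 0)
    (hlq : l ^ q ≠ l)
    (hFl : Fval q t δ l ≠ 0) (hGl : Gval q t k c Cc l ≠ 0)
    (hLξ : ∀ ξ : AlgebraicClosure F0, ξ ^ q ^ (k - 2 * t) = ξ → ξ ^ q ^ (k - t) ≠ ξ →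
      (ξ - ξ ^ q ^ t) ^ q ^ (k + t) * (ξ ^ q ^ (k - t) - ξ) ^ q ^ t
          * Fval q t δ l ^ (q ^ t + 1)
        + δ * (ξ ^ q ^ k - ξ) ^ (q ^ t * (q ^ t + 1)) * l ^ (q ^ t * (q ^ t + 1)) ≠ 0)
    (FCh : MvPolynomial (Fin 3) (AlgebraicClosure F0))
    (hhom : FCh.IsHomogeneous (q ^ k + q ^ (2 * t)))
    (hdeh : aeval ![X 0, X 1, 1] FCh = FC q t k δ c Cc l)
    (ξ : AlgebraicClosure F0) (hξ : ξ ^ q ^ (k - 2 * t) = ξ) :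
    (multAt (fxi FCh ξ) = q ^ (2 * t) - q ^ t ∨ multAt (fxi FCh ξ) = q ^ (2 * t)) ∧
      (multAt (fxi FCh ξ) = q ^ (2 * t) ↔ ξ ^ q ^ Nat.gcd k t = ξ) := by
  classical
  set p := ringChar F0 with hpdef
  haveI : CharP F0 p := ringChar.charP F0
  obtain ⟨mm, hpp, hcard⟩ := FiniteField.card F0 p
  haveI hpfact : Fact p.Prime := ⟨hpp⟩
  haveI : CharP (AlgebraicClosure F0) p :=
    charP_of_injective_algebraMap (algebraMap F0 (AlgebraicClosure F0)).injective p
  have hq : q = p ^ (mm : ℕ) := by rw [← hF0, hcard]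
  have hq3 : 3 ≤ q := hq2
  haveI : ExpChar (AlgebraicClosure F0) p := ExpChar.prime hpp
  -- Frobenius injectivity
  have hinj : ∀ cexp : ℕ,
      Function.Injective fun y : AlgebraicClosure F0 => y ^ q ^ cexp := by
    intro cexp a b hab
    have hqe : q ^ cexp = p ^ ((mm : ℕ) * cexp) := by rw [hq, ← pow_mul]
    apply (iterateFrobenius (AlgebraicClosure F0) p ((mm : ℕ) * cexp)).injective
    rw [iterateFrobenius_def, iterateFrobenius_def, ← hqe]
    exact hab
  have hl0 : l ≠ 0 := by
    intro h
    apply hlq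
    rw [h, zero_pow (show q ≠ 0 by omega)]
  have hξk : ξ ^ q ^ k = ξ ^ q ^ (2 * t) := by
    have h1 : (ξ ^ q ^ (k - 2 * t)) ^ q ^ (2 * t) = ξ ^ q ^ (2 * t) := by rw [hξ]
    rw [← h1, ← pow_mul, ← pow_add]
    congr 2
    omega
  have hS : fxi FCh ξ = Spoly q t k δ c Cc l ξ :=
    fxi_eq_Spoly p mm q t k hq hq3 ht h2tk δ c Cc l ξ FCh hhom hdeh
  rw [hS]
  have h3s := arith_s q t k hq3 ht h2tk
  have hsu := arith_su q t k hq3 ht h2tk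
  by_cases hfix : ξ ^ q ^ t = ξ
  · -- multiplicity q^(2t)
    have hξ2t : ξ ^ q ^ (2 * t) = ξ := by
      have h2 : ξ ^ q ^ (2 * t) = (ξ ^ q ^ t) ^ q ^ t := by
        rw [← pow_mul, ← pow_add]; congr 2; omega
      rw [h2, hfix, hfix]
    have hmult : multAt (Spoly q t k δ c Cc l ξ) = q ^ (2 * t) := by
      apply multAt_eq
      · intro d hd
        by_cases hd1 : d = q ^ (2 * t) - q ^ t
        · rw [hd1, comp_CB q t k δ c Cc l ξ hq3 ht h2tk]
          have hz : Fval q t δ l * Cc * ξ ^ q ^ t - Fval q t δ l * Cc * ξ ^ q ^ k = 0 := by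
            rw [hfix, hξk, hξ2t, sub_self]
          rw [hz, pc_zero]
        · by_cases hd2 : d = q ^ (2 * t) - 1
          · rw [hd2, comp_CC q t k δ c Cc l ξ hq3 ht h2tk]
            have hz : l ^ q ^ t * Cc * ξ ^ q ^ k - l ^ q ^ t * Cc * ξ = 0 := by
              rw [hξk, hξ2t, sub_self]
            rw [hz, pc_zero]
          · exact comp_CA q t k δ c Cc l ξ hq3 ht h2tk hξk d hd hd1 hd2
      · rw [comp_CD q t k δ c Cc l ξ hq3 ht h2tk]
        exact pc_tri_ne (neg_ne_zero.2 (mul_ne_zero (pow_ne_zero _ hl0) hCc))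
          (by omega) (by omega)
    refine ⟨Or.inr hmult, ?_, fun _ => hmult⟩
    intro _
    have h1 : ξ ^ q ^ Nat.gcd (k - 2 * t) t = ξ := fix_gcd q hinj hξ hfix
    have h2 : Nat.gcd k t = Nat.gcd (k - 2 * t) t := by
      conv_lhs => rw [show k = (k - 2 * t) + 2 * t from by omega]
      exact Nat.gcd_add_mul_right_left t (k - 2 * t) 2
    rw [h2]
    exact h1
  · -- multiplicity q^(2t) - q^t
    have hne : ξ ^ q ^ t ≠ ξ ^ q ^ (2 * t) := by
      intro h
      apply hfix
      apply hinj t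
      have h2 : (ξ ^ q ^ t) ^ q ^ t = ξ ^ q ^ (2 * t) := by
        rw [← pow_mul, ← pow_add]; congr 2; omega
      show (ξ ^ q ^ t) ^ q ^ t = ξ ^ q ^ t
      rw [h2, ← h]
    have hcoef : Fval q t δ l * Cc * ξ ^ q ^ t - Fval q t δ l * Cc * ξ ^ q ^ k ≠ 0 := by
      rw [hξk]
      intro h
      exact hne (mul_left_cancel₀ (mul_ne_zero hFl hCc) (sub_eq_zero.mp h))
    have hmult : multAt (Spoly q t k δ c Cc l ξ) = q ^ (2 * t) - q ^ t := by
      apply multAt_eq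
      · intro d hd
        exact comp_CA q t k δ c Cc l ξ hq3 ht h2tk hξk d (by omega) (by omega) (by omega)
      · rw [comp_CB q t k δ c Cc l ξ hq3 ht h2tk]
        exact pc_ne_zero _ _ hcoef
    refine ⟨Or.inl hmult, ?_, ?_⟩
    · intro h
      rw [hmult] at h
      omega
    · intro hgcd
      exact absurd (fix_dvd q hgcd (Nat.gcd_dvd_right k t)) hfix


end
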